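/- Let K and M be compact Hausdorff topological groups with normalized Haar measures λ and μ respectively, and let φ : K → M be a continuous surjective group homomorphism. If D is a dense subgroup of M that is not μ-measurable, then H := φ⁻¹(D) is a dense subgroup of K that is not λ-measurable. -/

import Mathlib

open MeasureTheory

/-- Converse of `measure_add_measure_compl₀` for probability measures. -/
lemma nullMeasurable_of_add_compl {α : Type*} [MeasurableSpace α] {ν : Measure α}
    [IsFiniteMeasure ν] {s : Set α} (h : ν s + ν sᶜ = ν Set.univ) :
    NullMeasurableSet s ν := by
  set A := toMeasurable ν s with hA
  set B := toMeasurable ν sᶜ with hB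
  have hsA : s ⊆ A := subset_toMeasurable ν s
  have hscB : sᶜ ⊆ B := subset_toMeasurable ν sᶜ
  have hAm : MeasurableSet A := measurableSet_toMeasurable ν s
  have hBm : MeasurableSet B := measurableSet_toMeasurable ν sᶜ
  have hνA : ν A = ν s := measure_toMeasurable s
  have hνB : ν B = ν sᶜ := measure_toMeasurable sᶜ
  have hunion : A ∪ B = Set.univ := by
    apply Set.eq_univ_of_univ_subset
    intro x _
    by_cases hx : x ∈ s
    · exact Or.inl (hsA hx)
    · exact Or.inr (hscB hx)
  have hinter : ν (A ∩ B) = 0 := by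
    have := measure_union_add_inter' (μ := ν) hAm B
    rw [hunion] at this
    have h2 : ν Set.univ + ν (A ∩ B) = ν Set.univ := by
      rw [this, hνA, hνB, h]
    have hfin : ν Set.univ ≠ ⊤ := measure_ne_top ν _
    exact (ENNReal.add_right_inj hfin).mp (by rw [h2, add_zero])
  -- s differs from Bᶜ by a null set: Bᶜ ⊆ s ⊆ A, and s \ Bᶜ ⊆ A ∩ B
  have hBcs : Bᶜ ⊆ s := by
    intro x hx
    by_contra hxs
    exact hx (hscB hxs)
  have hdiff : s \ Bᶜ ⊆ A ∩ B := by
    intro x ⟨hx1, hx2⟩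
    exact ⟨hsA hx1, not_not.mp hx2⟩
  have : NullMeasurableSet Bᶜ ν := hBm.compl.nullMeasurableSet
  refine NullMeasurableSet.congr this (ae_eq_set.mpr ⟨?_, ?_⟩)
  · exact measure_mono_null (by intro x ⟨h1, h2⟩; exact h2 (hBcs h1)) measure_empty
  · exact measure_mono_null hdiff hinter

/-- For a continuous map from a compact space, the pushforward outer measure of any set
equals the measure of its preimage, for an outer regular measure. -/
lemma map_apply_of_compact {K M : Type*} [TopologicalSpace K] [CompactSpace K]
    [MeasurableSpace K] [BorelSpace K] [TopologicalSpace M] [T2Space M]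
    [MeasurableSpace M] [BorelSpace M]
    (lam : Measure K) [lam.OuterRegular] {φ : K → M} (hc : Continuous φ) (T : Set M) :
    lam.map φ T = lam (φ ⁻¹' T) := by
  refine le_antisymm ?_ (Measure.le_map_apply hc.measurable.aemeasurable T)
  rw [Set.measure_eq_iInf_isOpen (φ ⁻¹' T) lam]
  simp only [le_iInf_iff]
  intro U hU hUopen
  have hKc : IsCompact (Uᶜ) := hUopen.isClosed_compl.isCompact
  have himg : IsCompact (φ '' Uᶜ) := hKc.image hc
  set A : Set M := (φ '' Uᶜ)ᶜ with hA
  have hAopen : IsOpen A := himg.isClosed.isOpen_compl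
  have hTA : T ⊆ A := by
    intro t ht hmem
    obtain ⟨k, hk, hkt⟩ := hmem
    exact hk (hU (by rwa [Set.mem_preimage, hkt]))
  have hpre : φ ⁻¹' A ⊆ U := by
    intro k hk
    by_contra hkU
    exact hk ⟨k, hkU, rfl⟩
  calc lam.map φ T ≤ lam.map φ A := measure_mono hTA
    _ = lam (φ ⁻¹' A) := Measure.map_apply hc.measurable hAopen.measurableSet
    _ ≤ lam U := measure_mono hpre

theorem stmt4 (K M : Type*) [Group K] [TopologicalSpace K] [IsTopologicalGroup K]
    [CompactSpace K] [T2Space K] [MeasurableSpace K] [BorelSpace K]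
    [Group M] [TopologicalSpace M] [IsTopologicalGroup M]
    [CompactSpace M] [T2Space M] [MeasurableSpace M] [BorelSpace M]
    (lam : Measure K) [lam.IsHaarMeasure] (hlam : lam Set.univ = 1)
    (μ : Measure M) [μ.IsHaarMeasure] (hμ : μ Set.univ = 1)
    (φ : K →* M) (hc : Continuous φ) (hs : Function.Surjective φ)
    (D : Subgroup M) (hDdense : Dense (D : Set M))
    (hDnm : ¬ NullMeasurableSet (D : Set M) μ) :
    Dense ((D.comap φ : Subgroup K) : Set K) ∧
    ¬ NullMeasurableSet ((D.comap φ : Subgroup K) : Set K) lam := by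
  set H := D.comap φ with hH
  have hHpre : (H : Set K) = φ ⁻¹' (D : Set M) := rfl
  have hmap : lam.map φ = μ :=
    (MonoidHom.measurePreserving hc hs (by rw [hlam, hμ])).map_eq
  constructor
  · -- density
    rw [dense_iff_closure_eq]
    set C := H.topologicalClosure with hC
    have hclos : closure (H : Set K) = (C : Set K) := rfl
    rw [hclos]
    have hCclosed : IsClosed (C : Set K) := H.isClosed_topologicalClosure
    have hCcompact : IsCompact (C : Set K) := hCclosed.isCompact
    have himgclosed : IsClosed (φ '' (C : Set K)) := (hCcompact.image hc).isClosed
    have himgD : (D : Set M) ⊆ φ '' (C : Set K) := by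
      intro d hd
      obtain ⟨k, hk⟩ := hs d
      exact ⟨k, H.le_topologicalClosure (by simp only [hH, Subgroup.mem_comap, hk]; exact hd), hk⟩
    have himguniv : φ '' (C : Set K) = Set.univ := by
      rw [← himgclosed.closure_eq]
      exact (hDdense.mono himgD).closure_eq
    apply Set.eq_univ_of_univ_subset
    intro k _
    have : φ k ∈ φ '' (C : Set K) := himguniv ▸ Set.mem_univ _
    obtain ⟨c, hcC, hck⟩ := this
    have hker : k * c⁻¹ ∈ C := by
      apply H.le_topologicalClosure
      simp only [hH, Subgroup.mem_comap, map_mul, map_inv, hck, mul_inv_cancel]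
      exact D.one_mem
    have : (k * c⁻¹) * c ∈ C := C.mul_mem hker hcC
    simpa using this
  · -- non-measurability
    intro hHnm
    apply hDnm
    have hprob : IsProbabilityMeasure lam := ⟨hlam⟩
    have hμprob : IsProbabilityMeasure μ := ⟨hμ⟩
    have key : ∀ T : Set M, μ T = lam (φ ⁻¹' T) := by
      intro T
      rw [← hmap, map_apply_of_compact lam hc T]
    have hcompl : (φ ⁻¹' (D : Set M))ᶜ = φ ⁻¹' ((D : Set M)ᶜ) := rfl
    have hsum : lam (H : Set K) + lam ((H : Set K)ᶜ) = lam Set.univ :=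
      measure_add_measure_compl₀ hHnm
    apply nullMeasurable_of_add_compl
    rw [key, key, hμ, ← hlam, ← hsum, hHpre, hcompl]
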